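/- arXiv:2411.05612 — 6 statements merged into one kernel-verified Lean document; each statement's English description precedes it below -/
import Mathlib

section
/- The linear Green-Sanders example GS(p,n) has VC-dimension at most 3, for all primes p > 2 and all n. -/
/-- The linear Green–Sanders example in `F_p^n`. -/
def GS (p n : ℕ) [NeZero p] : Set (Fin n → ZMod p) :=
  {x | ∃ i : Fin n, (∀ j < i, x j = 0) ∧ x i = 1}

/-- `A` has VC-dimension at least `k` (translate sense). -/
def VCge {G : Type*} [AddCommGroup G] (A : Set G) (k : ℕ) : Prop :=
  ∃ x : Fin k → G, ∃ y : Finset (Fin k) → G,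
    ∀ (S : Finset (Fin k)) (i : Fin k), x i + y S ∈ A ↔ i ∈ S

theorem gs_vc_le_three (p n : ℕ) (hp : p.Prime) (hp2 : 2 < p) (hn : 0 < n)
    [NeZero p] :
    ∀ k : ℕ, VCge (GS p n) k → k ≤ 3 := by
  classical
  intro k hk
  by_contra hk3
  push_neg at hk3
  obtain ⟨x, y, hxy⟩ := hk
  have h4 : ∀ m : Fin 4, (m : ℕ) < k := fun m => lt_of_lt_of_le m.2 hk3
  let e : Fin 4 ↪ Fin k := ⟨fun m => ⟨m, h4 m⟩, fun m m' h => by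
    simpa [Fin.ext_iff] using h⟩
  set a : Fin 4 → (Fin n → ZMod p) := fun m => x (e m) with ha
  have H : ∀ (T : Finset (Fin 4)) (m : Fin 4),
      a m + y (T.map e) ∈ GS p n ↔ m ∈ T := by
    intro T m
    rw [ha]
    rw [hxy]
    exact Finset.mem_map' e
  have one0 : (1 : ZMod p) ≠ 0 := by
    haveI : Fact (1 < p) := ⟨hp.one_lt⟩
    exact one_ne_zero
  -- the four points are distinct
  have a01 : a 0 ≠ a 1 := by
    intro heq
    have h0 : a 0 + y (({0} : Finset (Fin 4)).map e) ∈ GS p n :=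
      (H {0} 0).2 (by simp)
    rw [heq] at h0
    have := (H {0} 1).1 h0
    simp at this
  -- first coordinate of disagreement
  set D : Finset (Fin n) :=
    Finset.univ.filter (fun i => ¬ ∀ m m' : Fin 4, a m i = a m' i) with hD
  have hDne : D.Nonempty := by
    obtain ⟨i, hi⟩ : ∃ i, a 0 i ≠ a 1 i := by
      by_contra hcon; push_neg at hcon; exact a01 (funext hcon)
    refine ⟨i, ?_⟩
    simp only [hD, Finset.mem_filter, Finset.mem_univ, true_and]
    intro hall; exact hi (hall 0 1)
  set i₀ : Fin n := D.min' hDne with hi₀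
  have hi₀D : i₀ ∈ D := D.min'_mem hDne
  have agree : ∀ j, j < i₀ → ∀ m m' : Fin 4, a m j = a m' j := by
    intro j hj m m'
    by_contra hne
    have hjD : j ∈ D := by
      simp only [hD, Finset.mem_filter, Finset.mem_univ, true_and]
      intro hall; exact hne (hall m m')
    exact absurd (D.min'_le j hjD) (not_le.2 hj)
  set b : Fin 4 → ZMod p := fun m => a m i₀ with hb
  have bne : ∃ m m' : Fin 4, b m ≠ b m' := by
    have := hi₀D
    simp only [hD, Finset.mem_filter, Finset.mem_univ, true_and] at this
    push_neg at this
    exact this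
  -- key structural lemma
  have key : ∀ T : Finset (Fin 4), (∃ mp, mp ∈ T) → (∃ mm, mm ∉ T) →
      ∃ v : ZMod p, (∀ m, b m = v + 1 → m ∈ T) ∧
        (∀ m ∈ T, b m = v ∨ b m = v + 1) := by
    rintro T ⟨mp, hmp⟩ ⟨mm, hmm⟩
    let t : Fin n → ZMod p := y (T.map e)
    have HT : ∀ m, a m + t ∈ GS p n ↔ m ∈ T := fun m => H T m
    have hwit : ∀ m ∈ T, ∃ i : Fin n, i₀ ≤ i ∧
        (∀ j < i, a m j + t j = 0) ∧ a m i + t i = 1 := by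
      intro m hm
      have hmem := (HT m).2 hm
      simp only [GS, Set.mem_setOf_eq] at hmem
      obtain ⟨i, hpre, hone⟩ := hmem
      refine ⟨i, ?_, fun j hj => by simpa using hpre j hj, by simpa using hone⟩
      by_contra hlt
      push_neg at hlt
      have hmmT : mm ∈ T := by
        apply (HT mm).1
        refine ⟨i, fun j hj => ?_, ?_⟩
        · have hji : j < i₀ := lt_trans hj hlt
          show a mm j + t j = 0
          rw [agree j hji mm m]
          simpa using hpre j hj
        · show a mm i + t i = 1
          rw [agree i hlt mm m]
          simpa using hone
      exact hmm hmmT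
    have hpre0 : ∀ m : Fin 4, ∀ j, j < i₀ → a m j + t j = 0 := by
      intro m j hj
      obtain ⟨i, hi, hpre, _⟩ := hwit mp hmp
      have h0 := hpre j (lt_of_lt_of_le hj hi)
      rw [agree j hj m mp]
      exact h0
    refine ⟨-(t i₀), ?_, ?_⟩
    · intro m hm1
      apply (HT m).1
      refine ⟨i₀, fun j hj => ?_, ?_⟩
      · show a m j + t j = 0
        exact hpre0 m j hj
      · show a m i₀ + t i₀ = 1
        have : b m = -(t i₀) + 1 := hm1
        rw [hb] at this
        simp only at this
        linear_combination this
    · intro m hm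
      obtain ⟨i, hi, hpre, hone⟩ := hwit m hm
      rcases eq_or_lt_of_le hi with heq | hlt
      · right
        rw [← heq] at hone
        show a m i₀ = -(t i₀) + 1
        linear_combination hone
      · left
        have h0 := hpre i₀ hlt
        show a m i₀ = -(t i₀)
        linear_combination h0
  -- endgame
  by_cases hrep : ∃ u w : Fin 4, u ≠ w ∧ b u = b w
  · obtain ⟨u, w, huw, hbuw⟩ := hrep
    obtain ⟨m1, m2, hm12⟩ := bne
    obtain ⟨z, hz⟩ : ∃ z, b z ≠ b u := by
      by_cases h1 : b m1 = b u
      · exact ⟨m2, fun h => hm12 (h1.trans h.symm)⟩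
      · exact ⟨m1, h1⟩
    obtain ⟨v1, h1a, h1b⟩ := key {u} ⟨u, Finset.mem_singleton_self u⟩
      ⟨w, fun h => huw ((Finset.mem_singleton.1 h).symm)⟩
    have hbu1 : b u = v1 := by
      rcases h1b u (Finset.mem_singleton_self u) with h | h
      · exact h
      · exfalso
        have := h1a w (hbuw.symm ▸ h)
        exact huw (Finset.mem_singleton.1 this).symm
    have none : ∀ m, b m ≠ b u + 1 := by
      intro m hm
      have hmu : m = u := Finset.mem_singleton.1 (h1a m (by rw [hm, hbu1]))
      rw [hmu] at hm
      exact one0 (by linear_combination hm.symm)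
    have hzw : z ≠ w := fun h => hz (by rw [h, ← hbuw])
    obtain ⟨v2, h2a, h2b⟩ := key {u, z} ⟨u, by simp⟩
      ⟨w, by
        simp only [Finset.mem_insert, Finset.mem_singleton]
        rintro (h | h)
        · exact huw h.symm
        · exact hzw h.symm⟩
    have hbu2 : b u = v2 := by
      rcases h2b u (by simp) with h | h
      · exact h
      · exfalso
        have := h2a w (hbuw.symm ▸ h)
        simp only [Finset.mem_insert, Finset.mem_singleton] at this
        rcases this with h' | h'
        · exact huw h'.symm
        · exact hzw h'.symm
    rcases h2b z (by simp) with h | h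
    · exact hz (h.trans hbu2.symm)
    · exact none z (by rw [h, ← hbu2])
  · push_neg at hrep
    obtain ⟨v3, _, h3⟩ := key ({0, 1, 2} : Finset (Fin 4)) ⟨0, by decide⟩
      ⟨3, by decide⟩
    have h0 := h3 0 (by decide)
    have h1 := h3 1 (by decide)
    have h2 := h3 2 (by decide)
    rcases h0 with h0 | h0 <;> rcases h1 with h1 | h1 <;> rcases h2 with h2 | h2 <;>
      first
      | exact hrep 0 1 (by decide) (h0.trans h1.symm)
      | exact hrep 0 2 (by decide) (h0.trans h2.symm)
      | exact hrep 1 2 (by decide) (h1.trans h2.symm)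
end

section
/- The set GS(3,n) (for n ≥ 3) shatters the set S = {(0,0,0,...), (0,1,-1,0,...), (0,-1,1,0,...)}: for every subset T of S there exists y ∈ F_3^n such that for all s ∈ S, s + y ∈ GS(3,n) if and only if s ∈ T. Hence GS(3,n) has VC-dimension at least 3. -/
/-- The vector `(0, 1, -1, 0, ..., 0)` in `F_3^n`. -/
def v (n : ℕ) : Fin n → ZMod 3 :=
  fun j => if (j : ℕ) = 1 then 1 else if (j : ℕ) = 2 then -1 else 0

def w (n : ℕ) (a b c : ZMod 3) : Fin n → ZMod 3 :=
  fun j => if (j : ℕ) = 0 then a else if (j : ℕ) = 1 then b else if (j : ℕ) = 2 then c else 0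

lemma mem_w {n : ℕ} (hn : 3 ≤ n) (a b c : ZMod 3) :
    w n a b c ∈ GS 3 n ↔ (a = 1 ∨ (a = 0 ∧ b = 1) ∨ (a = 0 ∧ b = 0 ∧ c = 1)) := by
  constructor
  · rintro ⟨i, hj, hi⟩
    have hcase : (i : ℕ) = 0 ∨ (i : ℕ) = 1 ∨ (i : ℕ) = 2 ∨ 3 ≤ (i : ℕ) := by omega
    rcases hcase with h | h | h | h
    · left; simpa [w, h] using hi
    · right; left
      have h0 : w n a b c ⟨0, by omega⟩ = 0 := hj ⟨0, by omega⟩ (by simp [Fin.lt_def, h])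
      constructor
      · simpa [w] using h0
      · simpa [w, h] using hi
    · right; right
      have h0 : w n a b c ⟨0, by omega⟩ = 0 := hj ⟨0, by omega⟩ (by simp [Fin.lt_def, h])
      have h1 : w n a b c ⟨1, by omega⟩ = 0 := hj ⟨1, by omega⟩ (by simp [Fin.lt_def, h])
      refine ⟨by simpa [w] using h0, by simpa [w] using h1, by simpa [w, h] using hi⟩
    · exfalso
      have : w n a b c i = 0 := by
        simp only [w]
        rw [if_neg (by omega), if_neg (by omega), if_neg (by omega)]
      rw [this] at hi; exact absurd hi (by decide)
  · rintro (h | ⟨h0, h1⟩ | ⟨h0, h1, h2⟩)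
    · exact ⟨⟨0, by omega⟩, fun j hj => absurd (Fin.lt_def.mp hj) (Nat.not_lt_zero _),
        by simpa [w] using h⟩
    · refine ⟨⟨1, by omega⟩, fun j hj => ?_, by simpa [w] using h1⟩
      have : (j : ℕ) = 0 := by have h' : (j : ℕ) < 1 := Fin.lt_def.mp hj; omega
      simpa [w, this] using h0
    · refine ⟨⟨2, by omega⟩, fun j hj => ?_, by simpa [w] using h2⟩
      have : (j : ℕ) = 0 ∨ (j : ℕ) = 1 := by have h' : (j : ℕ) < 2 := Fin.lt_def.mp hj; omega
      rcases this with h | h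
      · simpa [w, h] using h0
      · simpa [w, h] using h1

lemma v_add_w (n : ℕ) (a b c : ZMod 3) : v n + w n a b c = w n a (b + 1) (c - 1) := by
  funext j
  simp only [Pi.add_apply, v, w]
  split_ifs <;> first | (exfalso; omega) | ring

lemma neg_v_add_w (n : ℕ) (a b c : ZMod 3) : -v n + w n a b c = w n a (b - 1) (c + 1) := by
  funext j
  simp only [Pi.add_apply, Pi.neg_apply, v, w]
  split_ifs <;> first | (exfalso; omega) | ring

lemma core (n : ℕ) (hn : 3 ≤ n) (b0 b1 b2 : Bool) :
    ∃ y : Fin n → ZMod 3,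
      ((0 : Fin n → ZMod 3) + y ∈ GS 3 n ↔ b0 = true) ∧
      (v n + y ∈ GS 3 n ↔ b1 = true) ∧ (-v n + y ∈ GS 3 n ↔ b2 = true) := by
  rcases b0 <;> rcases b1 <;> rcases b2
  · exact ⟨w n 2 0 0, by rw [zero_add, mem_w hn]; decide,
      by rw [v_add_w, mem_w hn]; decide, by rw [neg_v_add_w, mem_w hn]; decide⟩
  · exact ⟨w n 0 2 0, by rw [zero_add, mem_w hn]; decide,
      by rw [v_add_w, mem_w hn]; decide, by rw [neg_v_add_w, mem_w hn]; decide⟩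
  · exact ⟨w n 0 0 0, by rw [zero_add, mem_w hn]; decide,
      by rw [v_add_w, mem_w hn]; decide, by rw [neg_v_add_w, mem_w hn]; decide⟩
  · exact ⟨w n 0 2 2, by rw [zero_add, mem_w hn]; decide,
      by rw [v_add_w, mem_w hn]; decide, by rw [neg_v_add_w, mem_w hn]; decide⟩
  · exact ⟨w n 0 1 1, by rw [zero_add, mem_w hn]; decide,
      by rw [v_add_w, mem_w hn]; decide, by rw [neg_v_add_w, mem_w hn]; decide⟩
  · exact ⟨w n 0 1 0, by rw [zero_add, mem_w hn]; decide,
      by rw [v_add_w, mem_w hn]; decide, by rw [neg_v_add_w, mem_w hn]; decide⟩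
  · exact ⟨w n 0 0 1, by rw [zero_add, mem_w hn]; decide,
      by rw [v_add_w, mem_w hn]; decide, by rw [neg_v_add_w, mem_w hn]; decide⟩
  · exact ⟨w n 1 0 0, by rw [zero_add, mem_w hn]; decide,
      by rw [v_add_w, mem_w hn]; decide, by rw [neg_v_add_w, mem_w hn]; decide⟩

theorem gs3_shatters (n : ℕ) (hn : 3 ≤ n) :
    (∀ T ⊆ ({0, v n, -v n} : Set (Fin n → ZMod 3)),
      ∃ y : Fin n → ZMod 3, ∀ s ∈ ({0, v n, -v n} : Set (Fin n → ZMod 3)),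
        (s + y ∈ GS 3 n ↔ s ∈ T)) ∧
    VCge (GS 3 n) 3 := by
  classical
  constructor
  · intro T _
    obtain ⟨y, hy0, hy1, hy2⟩ :=
      core n hn (decide (0 ∈ T)) (decide (v n ∈ T)) (decide (-v n ∈ T))
    refine ⟨y, ?_⟩
    intro s hs
    simp only [Set.mem_insert_iff, Set.mem_singleton_iff] at hs
    rcases hs with rfl | rfl | rfl
    · rw [hy0, decide_eq_true_eq]
    · rw [hy1, decide_eq_true_eq]
    · rw [hy2, decide_eq_true_eq]
  · refine ⟨![0, v n, -v n],
      fun S => (core n hn (decide ((0 : Fin 3) ∈ S)) (decide ((1 : Fin 3) ∈ S))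
        (decide ((2 : Fin 3) ∈ S))).choose, fun S i => ?_⟩
    obtain ⟨h0, h1, h2⟩ := (core n hn (decide ((0 : Fin 3) ∈ S)) (decide ((1 : Fin 3) ∈ S))
        (decide ((2 : Fin 3) ∈ S))).choose_spec
    fin_cases i
    · simpa [decide_eq_true_eq] using h0
    · simpa [decide_eq_true_eq] using h1
    · simpa [decide_eq_true_eq] using h2
end

section
/- For any r ≥ 2, the r-colour bipartite Ramsey number br(r; 3, 3) is at most 4r^3 + 1: every r-colouring of the edges of the complete bipartite graph K_{n,n} with n = 4r^3 + 1 contains a monochromatic copy of K_{3,3}. -/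
private lemma sum_cube_expand {α : Type*} (s : Finset α) (f : α → ℕ) :
    (∑ i ∈ s, f i) ^ 3 = ∑ i1 ∈ s, ∑ i2 ∈ s, ∑ i3 ∈ s, f i1 * f i2 * f i3 := by
  simp only [pow_succ, pow_zero, one_mul, Finset.sum_mul_sum, Finset.sum_mul, Finset.mul_sum,
    mul_assoc]
  exact Finset.sum_congr rfl fun _ _ => Finset.sum_congr rfl fun _ _ =>
    Finset.sum_congr rfl fun _ _ => by ring

private lemma ite_mul3 (P Q R : Prop) [Decidable P] [Decidable Q] [Decidable R] :
    (if P then (1:ℕ) else 0) * (if Q then (1:ℕ) else 0) * (if R then (1:ℕ) else 0)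
      = if P ∧ Q ∧ R then (1:ℕ) else 0 := by
  by_cases hP : P <;> by_cases hQ : Q <;> by_cases hR : R <;> simp [hP, hQ, hR]

theorem bipartite_ramsey_333 (r : ℕ) (hr : 2 ≤ r) :
    ∀ χ : Fin (4 * r ^ 3 + 1) → Fin (4 * r ^ 3 + 1) → Fin r,
      ∃ c : Fin r, ∃ S T : Finset (Fin (4 * r ^ 3 + 1)),
        S.card = 3 ∧ T.card = 3 ∧ ∀ i ∈ S, ∀ j ∈ T, χ i j = c := by
  intro χ
  by_contra hcon
  push_neg at hcon
  -- key : monochromatic common neighbourhoods of 3 distinct rows have ≤ 2 columns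
  have key : ∀ (c : Fin r) (i1 i2 i3 : Fin (4 * r ^ 3 + 1)), i1 ≠ i2 → i1 ≠ i3 → i2 ≠ i3 →
      (∑ j : Fin (4 * r ^ 3 + 1), if χ i1 j = c ∧ χ i2 j = c ∧ χ i3 j = c then (1:ℕ) else 0) ≤ 2 := by
    intro c i1 i2 i3 h12 h13 h23
    rw [← Finset.card_filter]
    by_contra hbig
    push_neg at hbig
    obtain ⟨T, hTsub, hTcard⟩ := Finset.exists_subset_card_eq hbig
    have hS : ({i1, i2, i3} : Finset (Fin (4 * r ^ 3 + 1))).card = 3 := by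
      rw [Finset.card_insert_of_notMem (by simp [h12, h13]),
        Finset.card_insert_of_notMem (by simp [h23]), Finset.card_singleton]
    obtain ⟨i, hiS, j, hjT, hne⟩ := hcon c {i1, i2, i3} T hS hTcard
    have hj := hTsub hjT
    simp only [Finset.mem_filter] at hj
    simp only [Finset.mem_insert, Finset.mem_singleton] at hiS
    rcases hiS with rfl | rfl | rfl <;> tauto
  -- the central counting quantity
  set Tot : ℕ := ∑ j : Fin (4 * r ^ 3 + 1), ∑ c : Fin r, (∑ i : Fin (4 * r ^ 3 + 1), if χ i j = c then (1:ℕ) else 0) ^ 3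
    with hTot
  -- lower bound via power mean
  have hlow : ∀ j : Fin (4 * r ^ 3 + 1), (4 * r ^ 3 + 1) ^ 3 ≤ r ^ 2 * ∑ c : Fin r,
      (∑ i : Fin (4 * r ^ 3 + 1), if χ i j = c then (1:ℕ) else 0) ^ 3 := by
    intro j
    have hsum : (∑ c : Fin r, ∑ i : Fin (4 * r ^ 3 + 1), if χ i j = c then (1:ℕ) else 0) = (4 * r ^ 3 + 1) := by
      rw [Finset.sum_comm]
      simp [Finset.sum_ite_eq]
    have hreal := pow_sum_le_card_mul_sum_pow
      (s := (Finset.univ : Finset (Fin r)))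
      (f := fun c => ((∑ i : Fin (4 * r ^ 3 + 1), if χ i j = c then (1:ℕ) else 0 : ℕ) : ℝ))
      (fun _ _ => by positivity) 2
    rw [← Nat.cast_sum, hsum] at hreal
    simp only [Finset.card_univ, Fintype.card_fin] at hreal
    simp only [← Finset.card_filter]
    norm_num at hreal
    exact_mod_cast hreal
  have hlower : (4 * r ^ 3 + 1) ^ 4 ≤ r ^ 2 * Tot := by
    calc (4 * r ^ 3 + 1) ^ 4 = ∑ _j : Fin (4 * r ^ 3 + 1), (4 * r ^ 3 + 1) ^ 3 := by
          simp [Finset.sum_const, Finset.card_univ]; ring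
      _ ≤ ∑ j : Fin (4 * r ^ 3 + 1), r ^ 2 * ∑ c : Fin r,
            (∑ i : Fin (4 * r ^ 3 + 1), if χ i j = c then (1:ℕ) else 0) ^ 3 :=
          Finset.sum_le_sum fun j _ => hlow j
      _ = r ^ 2 * Tot := by rw [hTot, Finset.mul_sum]
  -- rewrite Tot as a sum over triples
  have hTeq : Tot = ∑ i1 : Fin (4 * r ^ 3 + 1), ∑ i2 : Fin (4 * r ^ 3 + 1), ∑ i3 : Fin (4 * r ^ 3 + 1), ∑ c : Fin r, ∑ j : Fin (4 * r ^ 3 + 1),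
      (if χ i1 j = c then (1:ℕ) else 0) * (if χ i2 j = c then (1:ℕ) else 0)
        * (if χ i3 j = c then (1:ℕ) else 0) := by
    rw [hTot]
    conv_lhs => enter [2, j, 2, c]; rw [sum_cube_expand]
    rw [Finset.sum_comm]
    conv_lhs => enter [2, c]; rw [Finset.sum_comm]
    rw [Finset.sum_comm]
    conv_lhs => enter [2, i1, 2, c]; rw [Finset.sum_comm]
    conv_lhs => enter [2, i1]; rw [Finset.sum_comm]
    conv_lhs => enter [2, i1, 2, i2, 2, c]; rw [Finset.sum_comm]
    conv_lhs => enter [2, i1, 2, i2]; rw [Finset.sum_comm]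
  -- pointwise upper bound on the inner double sum
  have inner_bound : ∀ i1 i2 i3 : Fin (4 * r ^ 3 + 1),
      (∑ c : Fin r, ∑ j : Fin (4 * r ^ 3 + 1),
        (if χ i1 j = c then (1:ℕ) else 0) * (if χ i2 j = c then (1:ℕ) else 0)
          * (if χ i3 j = c then (1:ℕ) else 0))
      ≤ 2 * r + (if i1 = i2 ∨ i1 = i3 ∨ i2 = i3 then (4 * r ^ 3 + 1) else 0) := by
    intro i1 i2 i3
    by_cases hd : i1 = i2 ∨ i1 = i3 ∨ i2 = i3
    · rw [if_pos hd]
      have hN1 : (∑ c : Fin r, ∑ j : Fin (4 * r ^ 3 + 1),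
          (if χ i1 j = c then (1:ℕ) else 0) * (if χ i2 j = c then (1:ℕ) else 0)
            * (if χ i3 j = c then (1:ℕ) else 0)) ≤ (4 * r ^ 3 + 1) := by
        rw [Finset.sum_comm]
        calc (∑ j : Fin (4 * r ^ 3 + 1), ∑ c : Fin r, _) ≤ ∑ _j : Fin (4 * r ^ 3 + 1), 1 :=
            Finset.sum_le_sum fun j _ => ?_
          _ = (4 * r ^ 3 + 1) := by simp
        calc (∑ c : Fin r,
              (if χ i1 j = c then (1:ℕ) else 0) * (if χ i2 j = c then (1:ℕ) else 0)
                * (if χ i3 j = c then (1:ℕ) else 0))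
            ≤ ∑ c : Fin r, (if χ i1 j = c then (1:ℕ) else 0) :=
              Finset.sum_le_sum fun c _ => by
                by_cases h1 : χ i1 j = c <;> by_cases h2 : χ i2 j = c <;>
                  by_cases h3 : χ i3 j = c <;> simp [h1, h2, h3]
          _ = 1 := by simp [Finset.sum_ite_eq]
      omega
    · rw [if_neg hd]
      push_neg at hd
      obtain ⟨h12, h13, h23⟩ := hd
      calc (∑ c : Fin r, ∑ j : Fin (4 * r ^ 3 + 1),
            (if χ i1 j = c then (1:ℕ) else 0) * (if χ i2 j = c then (1:ℕ) else 0)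
              * (if χ i3 j = c then (1:ℕ) else 0))
          ≤ ∑ _c : Fin r, 2 := Finset.sum_le_sum fun c _ => by
            calc (∑ j : Fin (4 * r ^ 3 + 1),
                (if χ i1 j = c then (1:ℕ) else 0) * (if χ i2 j = c then (1:ℕ) else 0)
                  * (if χ i3 j = c then (1:ℕ) else 0))
                = ∑ j : Fin (4 * r ^ 3 + 1), if χ i1 j = c ∧ χ i2 j = c ∧ χ i3 j = c then (1:ℕ) else 0 :=
                  Finset.sum_congr rfl fun j _ => ite_mul3 _ _ _
              _ ≤ 2 := key c i1 i2 i3 h12 h13 h23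
        _ = 2 * r := by simp [mul_comm]
  -- total upper bound
  have hbad : (∑ i1 : Fin (4 * r ^ 3 + 1), ∑ i2 : Fin (4 * r ^ 3 + 1), ∑ i3 : Fin (4 * r ^ 3 + 1),
      (if i1 = i2 ∨ i1 = i3 ∨ i2 = i3 then (4 * r ^ 3 + 1) else 0)) ≤ 3 * (4 * r ^ 3 + 1) ^ 3 := by
    calc (∑ i1 : Fin (4 * r ^ 3 + 1), ∑ i2 : Fin (4 * r ^ 3 + 1), ∑ i3 : Fin (4 * r ^ 3 + 1),
          (if i1 = i2 ∨ i1 = i3 ∨ i2 = i3 then (4 * r ^ 3 + 1) else 0))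
        ≤ ∑ i1 : Fin (4 * r ^ 3 + 1), ∑ i2 : Fin (4 * r ^ 3 + 1), ∑ i3 : Fin (4 * r ^ 3 + 1),
            ((if i1 = i2 then (4 * r ^ 3 + 1) else 0) + (if i1 = i3 then (4 * r ^ 3 + 1) else 0)
              + (if i2 = i3 then (4 * r ^ 3 + 1) else 0)) := by
          refine Finset.sum_le_sum fun i1 _ => Finset.sum_le_sum fun i2 _ =>
            Finset.sum_le_sum fun i3 _ => ?_
          by_cases h1 : i1 = i2 <;> by_cases h2 : i1 = i3 <;> by_cases h3 : i2 = i3 <;>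
            simp [h1, h2, h3]
      _ = 3 * (4 * r ^ 3 + 1) ^ 3 := by
          simp [Finset.sum_add_distrib, Finset.sum_ite_eq, Finset.sum_const,
            Finset.card_univ]
          ring
  have hupper : Tot ≤ 2 * r * (4 * r ^ 3 + 1) ^ 3 + 3 * (4 * r ^ 3 + 1) ^ 3 := by
    rw [hTeq]
    calc (∑ i1 : Fin (4 * r ^ 3 + 1), ∑ i2 : Fin (4 * r ^ 3 + 1), ∑ i3 : Fin (4 * r ^ 3 + 1), ∑ c : Fin r, ∑ j : Fin (4 * r ^ 3 + 1),
          (if χ i1 j = c then (1:ℕ) else 0) * (if χ i2 j = c then (1:ℕ) else 0)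
            * (if χ i3 j = c then (1:ℕ) else 0))
        ≤ ∑ i1 : Fin (4 * r ^ 3 + 1), ∑ i2 : Fin (4 * r ^ 3 + 1), ∑ i3 : Fin (4 * r ^ 3 + 1),
            (2 * r + (if i1 = i2 ∨ i1 = i3 ∨ i2 = i3 then (4 * r ^ 3 + 1) else 0)) :=
          Finset.sum_le_sum fun i1 _ => Finset.sum_le_sum fun i2 _ =>
            Finset.sum_le_sum fun i3 _ => inner_bound i1 i2 i3
      _ = 2 * r * (4 * r ^ 3 + 1) ^ 3 + ∑ i1 : Fin (4 * r ^ 3 + 1), ∑ i2 : Fin (4 * r ^ 3 + 1), ∑ i3 : Fin (4 * r ^ 3 + 1),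
            (if i1 = i2 ∨ i1 = i3 ∨ i2 = i3 then (4 * r ^ 3 + 1) else 0) := by
          simp [Finset.sum_add_distrib, Finset.sum_const, Finset.card_univ]
          ring
      _ ≤ 2 * r * (4 * r ^ 3 + 1) ^ 3 + 3 * (4 * r ^ 3 + 1) ^ 3 :=
          Nat.add_le_add_left hbad _
  -- combine
  have hN3 : 0 < (4 * r ^ 3 + 1) ^ 3 := by positivity
  have hfinal : (4 * r ^ 3 + 1) ≤ 2 * r ^ 3 + 3 * r ^ 2 := by
    have h1 : (4 * r ^ 3 + 1) ^ 4 ≤ r ^ 2 * (2 * r * (4 * r ^ 3 + 1) ^ 3 + 3 * (4 * r ^ 3 + 1) ^ 3) :=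
      le_trans hlower (Nat.mul_le_mul_left _ hupper)
    have h2 : (4 * r ^ 3 + 1) * (4 * r ^ 3 + 1) ^ 3 ≤ (2 * r ^ 3 + 3 * r ^ 2) * (4 * r ^ 3 + 1) ^ 3 := by
      calc (4 * r ^ 3 + 1) * (4 * r ^ 3 + 1) ^ 3 = (4 * r ^ 3 + 1) ^ 4 := by ring
        _ ≤ r ^ 2 * (2 * r * (4 * r ^ 3 + 1) ^ 3 + 3 * (4 * r ^ 3 + 1) ^ 3) := h1
        _ = (2 * r ^ 3 + 3 * r ^ 2) * (4 * r ^ 3 + 1) ^ 3 := by ring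
    exact Nat.le_of_mul_le_mul_right h2 hN3
  nlinarith [hr, hfinal]
end

section
/- Let G be a bipartite graph with parts of sizes m and n and edge density ρ ∈ (0,1]. If m > (q−1)/ρ and n > (s−1)·C(m,q)/C(ρm,q) (where C denotes the generalized binomial coefficient), then G contains a copy of the complete bipartite graph K_{q,s}. -/
open Finset

lemma truncFactor_mono (i : ℕ) : Monotone fun x : ℝ => max (x - i) 0 :=
  fun a b hab => max_le_max (by linarith) le_rfl

lemma truncFactor_convex (i : ℕ) : ConvexOn ℝ Set.univ fun x : ℝ => max (x - i) 0 := by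
  have h1 : ConvexOn ℝ (Set.univ : Set ℝ) fun x : ℝ => x - i := by
    have := (convexOn_id (convex_univ (𝕜 := ℝ) (E := ℝ))).sub (concaveOn_const (i:ℝ) convex_univ)
    simpa [Pi.sub_def] using this
  have := h1.sup (convexOn_const (0:ℝ) convex_univ)
  simpa [Pi.sup_def] using this

lemma truncProd_mono (q : ℕ) : Monotone fun x : ℝ => ∏ i ∈ range q, max (x - i) 0 := by
  induction q with
  | zero => simpa using monotone_const
  | succ k ih =>
    simp_rw [prod_range_succ]
    exact ih.mul (truncFactor_mono k)
      (fun x => prod_nonneg fun i _ => le_max_right _ _) (fun x => le_max_right _ _)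

lemma truncProd_convex (q : ℕ) : ConvexOn ℝ Set.univ fun x : ℝ => ∏ i ∈ range q, max (x - i) 0 := by
  induction q with
  | zero => simpa using convexOn_const (1:ℝ) convex_univ
  | succ k ih =>
    simp_rw [prod_range_succ]
    exact ih.mul (truncFactor_convex k)
      (fun x _ => prod_nonneg fun i _ => le_max_right _ _) (fun x _ => le_max_right _ _)
      (((truncProd_mono k).monovary (truncFactor_mono k)).monovaryOn _)

lemma truncProd_nat (d q : ℕ) :
    (∏ i ∈ range q, max ((d:ℝ) - i) 0) = (d.descFactorial q : ℝ) := by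
  rw [Nat.descFactorial_eq_prod_range, Nat.cast_prod]
  refine prod_congr rfl fun i _ => ?_
  rcases le_or_gt i d with h | h
  · rw [Nat.cast_sub h, max_eq_left (by simp [Nat.cast_le.2 h])]
  · rw [Nat.sub_eq_zero_of_le h.le, max_eq_right (by simp [Nat.cast_le.2 h.le]), Nat.cast_zero]

lemma truncProd_of_big {x : ℝ} {q : ℕ} (hx : (q:ℝ) - 1 < x) :
    (∏ i ∈ range q, max (x - i) 0) = ∏ i ∈ range q, (x - i) := by
  refine prod_congr rfl fun i hi => max_eq_left ?_
  have h1 : (i:ℝ) + 1 ≤ q := by exact_mod_cast mem_range.1 hi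
  linarith


/-- Generalized binomial coefficient `C(x, q) = x(x-1)⋯(x-q+1)/q!` for real `x`. -/
noncomputable def genChoose (x : ℝ) (q : ℕ) : ℝ :=
  (∏ i ∈ Finset.range q, (x - i)) / (Nat.factorial q)

theorem kovari_sos_turan_type (m n q s : ℕ) (hq : 1 ≤ q) (hs : 1 ≤ s)
    (E : Fin m → Fin n → Prop) [DecidablePred fun p : Fin m × Fin n => E p.1 p.2]
    (ρ : ℝ) (hρ0 : 0 < ρ) (hρ1 : ρ ≤ 1)
    (hdens : ((Finset.univ.filter fun p : Fin m × Fin n => E p.1 p.2).card : ℝ)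
      = ρ * m * n)
    (hm : (q - 1 : ℝ) / ρ < m)
    (hn : (s - 1 : ℝ) * genChoose m q / genChoose (ρ * m) q < n) :
    ∃ S : Finset (Fin m), ∃ T : Finset (Fin n),
      S.card = q ∧ T.card = s ∧ ∀ i ∈ S, ∀ j ∈ T, E i j := by
  classical
  by_contra hcon
  push_neg at hcon
  set Nb : Fin n → Finset (Fin m) := fun j => univ.filter fun i => E i j with hNb
  set deg : Fin n → ℕ := fun j => (Nb j).card with hdeg
  have hcard : (Finset.univ.filter fun p : Fin m × Fin n => E p.1 p.2).card = ∑ j, deg j := by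
    rw [card_filter, ← Finset.univ_product_univ, Finset.sum_product]
    rw [Finset.sum_comm]
    refine sum_congr rfl fun j _ => ?_
    rw [hdeg]
    simp only [hNb, card_filter]
    exact sum_congr rfl fun i _ => by congr
  -- every q-set has at most s-1 common neighbours
  have key : ∀ Q : Finset (Fin m), Q.card = q →
      (univ.filter fun j : Fin n => Q ⊆ Nb j).card ≤ s - 1 := by
    intro Q hQ
    by_contra hgt
    push_neg at hgt
    have hs' : s ≤ (univ.filter fun j : Fin n => Q ⊆ Nb j).card := by omega
    obtain ⟨T, hTsub, hTcard⟩ := Finset.exists_subset_card_eq hs'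
    obtain ⟨i, hiQ, j, hjT, hnE⟩ := hcon Q T hQ hTcard
    have hj := (Finset.mem_filter.1 (hTsub hjT)).2
    have : i ∈ Nb j := hj hiQ
    rw [hNb] at this
    exact hnE (Finset.mem_filter.1 this).2
  -- double counting
  have hdouble : ∑ j, (deg j).choose q ≤ (s - 1) * m.choose q := by
    have h1 : ∀ j, (deg j).choose q
        = ((Finset.powersetCard q (univ : Finset (Fin m))).filter fun Q => Q ⊆ Nb j).card := by
      intro j
      rw [hdeg, ← Finset.card_powersetCard]
      congr 1
      ext Q
      simp only [Finset.mem_powersetCard, Finset.mem_filter, Finset.subset_univ, true_and]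
      tauto
    calc ∑ j, (deg j).choose q
        = ∑ j, ((Finset.powersetCard q (univ : Finset (Fin m))).filter fun Q => Q ⊆ Nb j).card := by
          simp only [h1]
      _ = ∑ Q ∈ Finset.powersetCard q (univ : Finset (Fin m)),
            (univ.filter fun j : Fin n => Q ⊆ Nb j).card := by
          simp only [card_filter]
          exact Finset.sum_comm
      _ ≤ ∑ _Q ∈ Finset.powersetCard q (univ : Finset (Fin m)), (s - 1) :=
          Finset.sum_le_sum fun Q hQ => key Q (Finset.mem_powersetCard.1 hQ).2
      _ = m.choose q * (s - 1) := by
          rw [Finset.sum_const, smul_eq_mul, Finset.card_powersetCard, card_univ,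
            Fintype.card_fin]
      _ = (s - 1) * m.choose q := mul_comm _ _
  -- basic numeric facts
  have hmq : (q:ℝ) - 1 < ρ * m := by
    rw [div_lt_iff₀ hρ0] at hm
    linarith
  have hmn : (0:ℝ) ≤ (m:ℝ) := Nat.cast_nonneg m
  have hρm_le : ρ * m ≤ m := by nlinarith
  have hqm : q ≤ m := by
    have h2 : (q:ℝ) < (m:ℝ) + 1 := by linarith
    have h3 : q < m + 1 := by exact_mod_cast h2
    omega
  have hprodpos : 0 < ∏ i ∈ range q, (ρ * m - i) := by
    refine Finset.prod_pos fun i hi => ?_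
    have h1 : (i:ℝ) + 1 ≤ q := by exact_mod_cast mem_range.1 hi
    linarith
  have hfacpos : (0:ℝ) < (Nat.factorial q : ℝ) := by exact_mod_cast q.factorial_pos
  have hgen_pos : 0 < genChoose (ρ * m) q := div_pos hprodpos hfacpos
  have hgenm : genChoose m q = (m.choose q : ℝ) := by
    unfold genChoose
    rw [← truncProd_of_big (x := (m:ℝ)) (q := q) (by push_cast; linarith), truncProd_nat,
      Nat.descFactorial_eq_factorial_mul_choose, Nat.cast_mul]
    field_simp
  have hs1 : (1:ℝ) ≤ (s:ℝ) := by exact_mod_cast hs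
  have hn0 : 0 < n := by
    rcases Nat.eq_zero_or_pos n with h | h
    · exfalso
      have hnum : (0:ℝ) ≤ ((s:ℝ) - 1) * genChoose m q := by
        apply mul_nonneg (by linarith)
        rw [hgenm]; positivity
      have : (0:ℝ) ≤ ((s:ℝ) - 1) * genChoose m q / genChoose (ρ * m) q :=
        div_nonneg hnum hgen_pos.le
      rw [h] at hn
      push_cast at hn
      linarith
    · exact h
  have hnR : (0:ℝ) < n := by exact_mod_cast hn0
  -- Jensen
  have hsumdeg : ∑ j, ((deg j : ℝ)) = ρ * m * n := by
    rw [← hdens, hcard]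
    push_cast
    rfl
  have hJ := (truncProd_convex q).map_sum_le (t := (univ : Finset (Fin n)))
      (w := fun _ : Fin n => (n:ℝ)⁻¹) (p := fun j => (deg j : ℝ))
      (fun _ _ => by positivity)
      (by rw [Finset.sum_const, card_univ, Fintype.card_fin, nsmul_eq_mul,
            mul_inv_cancel₀ (ne_of_gt hnR)])
      (fun _ _ => Set.mem_univ _)
  have havg : ∑ j, (n:ℝ)⁻¹ • ((deg j : ℝ)) = ρ * m := by
    simp only [smul_eq_mul, ← Finset.mul_sum]
    rw [hsumdeg]
    field_simp
  rw [havg] at hJ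
  rw [truncProd_of_big hmq] at hJ
  have hJ2 : (n:ℝ) * ∏ i ∈ range q, (ρ * m - i) ≤ ∑ j, ((deg j).descFactorial q : ℝ) := by
    have h4 : ∑ j, (n:ℝ)⁻¹ • (∏ i ∈ range q, max ((deg j : ℝ) - i) 0)
        = (n:ℝ)⁻¹ * ∑ j, ((deg j).descFactorial q : ℝ) := by
      simp only [smul_eq_mul, ← Finset.mul_sum]
      congr 1
      exact Finset.sum_congr rfl fun j _ => truncProd_nat _ _
    rw [h4] at hJ
    rw [mul_comm]
    exact (le_div_iff₀ hnR).1 (by rw [div_eq_inv_mul]; exact hJ)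
  -- combine with double counting
  have hdc : (∑ j, ((deg j).descFactorial q : ℝ))
      ≤ ((s:ℝ) - 1) * (Nat.factorial q : ℝ) * (m.choose q : ℝ) := by
    have h5 : ∑ j, ((deg j).descFactorial q : ℝ)
        = (Nat.factorial q : ℝ) * ∑ j, ((deg j).choose q : ℝ) := by
      rw [Finset.mul_sum]
      exact Finset.sum_congr rfl fun j _ => by
        rw [Nat.descFactorial_eq_factorial_mul_choose]; push_cast; ring
    rw [h5]
    have h6 : (∑ j, ((deg j).choose q : ℝ)) ≤ ((s:ℝ) - 1) * (m.choose q : ℝ) := by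
      have := hdouble
      have h7 : ((∑ j, (deg j).choose q : ℕ) : ℝ) ≤ (((s - 1) * m.choose q : ℕ) : ℝ) := by
        exact_mod_cast this
      push_cast [Nat.cast_sub hs] at h7
      exact h7
    nlinarith [Nat.cast_nonneg (α := ℝ) (m.choose q)]
  -- final contradiction
  have hlt : ((s:ℝ) - 1) * genChoose m q < (n:ℝ) * genChoose (ρ * m) q := by
    rw [div_lt_iff₀ hgen_pos] at hn
    linarith
  have hge : (n:ℝ) * genChoose (ρ * m) q ≤ ((s:ℝ) - 1) * genChoose m q := by
    rw [hgenm]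
    unfold genChoose
    rw [mul_div_assoc', div_le_iff₀ hfacpos]
    have h8 := hJ2.trans hdc
    have h9 : ((s:ℝ) - 1) * (Nat.factorial q : ℝ) * (m.choose q : ℝ)
        = ((s:ℝ) - 1) * (m.choose q : ℝ) * (Nat.factorial q : ℝ) := by ring
    linarith
  linarith
end

section
/- Let B be an atom of a quadratic factor on F_p^n defined by l linearly independent linear polynomials L_1,...,L_l and q quadratic polynomials P_i(x) = x^T M_i x with symmetric matrices M_i. If every nonzero linear combination λ_1 M_1 + ... + λ_q M_q has rank at least r, then for every label c ∈ F_p^{l+q}, the atom B = {x : L_1(x)=c_1,...,L_l(x)=c_l, P_1(x)=c_{l+1},...,P_q(x)=c_{l+q}} satisfies | |B| − p^{−(l+q)} p^n | ≤ p^{−r/2} p^n. -/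
open Matrix Finset AddChar Module

section aux
variable {p : ℕ} [Fact p.Prime]

lemma addChar_map_sum {M : Type*} [CommMonoid M] (ψ : AddChar (ZMod p) M) {ι : Type*}
    (s : Finset ι) (f : ι → ZMod p) : ψ (∑ i ∈ s, f i) = ∏ i ∈ s, ψ (f i) := by
  classical
  induction s using Finset.induction with
  | empty => simp
  | insert _ _ h ih => rw [Finset.sum_insert h, Finset.prod_insert h, ψ.map_add_eq_mul, ih]

lemma char_norm_one (ψ : AddChar (ZMod p) ℂ) (a : ZMod p) : ‖ψ a‖ = 1 := by
  have h : 0 < ringChar (ZMod p) := by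
    rw [ZMod.ringChar_zmod_n]; exact (Fact.out : p.Prime).pos
  exact Complex.norm_eq_one_of_mem_rootsOfUnity <| ψ.val_mem_rootsOfUnity a h

lemma char_conj (ψ : AddChar (ZMod p) ℂ) (a : ZMod p) :
    (starRingEnd ℂ) (ψ a) = ψ (-a) := by
  have h : 0 < ringChar (ZMod p) := by
    rw [ZMod.ringChar_zmod_n]; exact (Fact.out : p.Prime).pos
  rw [AddChar.starComp_apply h, AddChar.inv_apply]

lemma sum_char_pi (ψ : AddChar (ZMod p) ℂ) (hψ : ψ.IsPrimitive) {k : ℕ} (t : Fin k → ZMod p) :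
    ∑ a : Fin k → ZMod p, ψ (∑ j, a j * t j) = if t = 0 then (p : ℂ) ^ k else 0 := by
  classical
  simp_rw [addChar_map_sum ψ Finset.univ]
  have := Finset.prod_univ_sum (fun _ : Fin k => (Finset.univ : Finset (ZMod p)))
    (fun j b => ψ (b * t j))
  rw [Fintype.piFinset_univ] at this
  rw [← this]
  have h1 : ∀ j : Fin k, ∑ b : ZMod p, ψ (b * t j) = if t j = 0 then (p : ℂ) else 0 := by
    intro j
    rw [AddChar.sum_mulShift (t j) hψ, ZMod.card]
    split_ifs <;> simp
  simp_rw [h1]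
  by_cases ht : t = 0
  · simp [ht]
  · rw [if_neg ht]
    obtain ⟨j, hj⟩ := Function.ne_iff.mp ht
    simp only [Pi.zero_apply] at hj
    exact Finset.prod_eq_zero (Finset.mem_univ j) (if_neg hj)

lemma sum_char_linear (ψ : AddChar (ZMod p) ℂ) (hψ : ψ.IsPrimitive) {n : ℕ}
    (φ : (Fin n → ZMod p) →ₗ[ZMod p] ZMod p) :
    ∑ x : Fin n → ZMod p, ψ (φ x) = if φ = 0 then (p : ℂ) ^ n else 0 := by
  classical
  set t : Fin n → ZMod p := fun j => φ fun i => if j = i then 1 else 0 with ht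
  have h1 : ∀ x : Fin n → ZMod p, φ x = ∑ j, x j * t j := by
    intro x
    simpa [smul_eq_mul, ht] using φ.pi_apply_eq_sum_univ x
  simp_rw [h1]
  rw [sum_char_pi ψ hψ]
  congr 1
  have heq : t = 0 ↔ φ = 0 := by
    constructor
    · intro h
      refine LinearMap.ext fun x => ?_
      rw [h1 x]
      simp only [LinearMap.zero_apply, h, Pi.zero_apply, mul_zero, Finset.sum_const_zero]
    · intro h; ext j; simp [ht, h]
  simp [heq]

lemma sum_char_dot (ψ : AddChar (ZMod p) ℂ) (hψ : ψ.IsPrimitive) {n : ℕ}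
    (v : Fin n → ZMod p) :
    ∑ y : Fin n → ZMod p, ψ (v ⬝ᵥ y) = if v = 0 then (p : ℂ) ^ n else 0 := by
  have h : ∀ y : Fin n → ZMod p, v ⬝ᵥ y = ∑ j, y j * v j := by
    intro y; simp [dotProduct, mul_comm]
  simp_rw [h]
  exact sum_char_pi ψ hψ v


lemma matrix_sum_mulVec {R : Type*} [NonUnitalNonAssocSemiring R] {m n : Type*} [Fintype n]
    {ι : Type*} (s : Finset ι) (N : ι → Matrix m n R) (x : n → R) :
    (∑ i ∈ s, N i) *ᵥ x = ∑ i ∈ s, (N i *ᵥ x) := by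
  classical
  induction s using Finset.induction with
  | empty => simp [Matrix.zero_mulVec]
  | insert _ _ h ih => rw [Finset.sum_insert h, Finset.sum_insert h, Matrix.add_mulVec, ih]

lemma dotProduct_finset_sum {R : Type*} [NonUnitalNonAssocSemiring R] {n : Type*} [Fintype n]
    {ι : Type*} (s : Finset ι) (x : n → R) (v : ι → n → R) :
    x ⬝ᵥ (∑ i ∈ s, v i) = ∑ i ∈ s, x ⬝ᵥ v i := by
  classical
  induction s using Finset.induction with
  | empty => simp
  | insert _ _ h ih => rw [Finset.sum_insert h, Finset.sum_insert h, dotProduct_add, ih]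

lemma quad_sum_bound (hp2 : 2 < p) (ψ : AddChar (ZMod p) ℂ)
    (hψ : ψ.IsPrimitive) {n : ℕ}
    (A : Matrix (Fin n) (Fin n) (ZMod p)) (hA : A.IsSymm)
    (φ : (Fin n → ZMod p) →ₗ[ZMod p] ZMod p) {r : ℕ} (hr : r ≤ A.rank) :
    ‖∑ x : Fin n → ZMod p, ψ (x ⬝ᵥ A.mulVec x + φ x)‖ ≤ (p : ℝ) ^ ((n : ℝ) - r / 2) := by
  classical
  have hp1 : 1 < p := (Fact.out : p.Prime).one_lt
  set g : (Fin n → ZMod p) → ZMod p := fun x => x ⬝ᵥ A.mulVec x + φ x with hg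
  set T : ℂ := ∑ x, ψ (g x) with hT
  have h2 : (2 : ZMod p) ≠ 0 := by
    have hd : ¬ (p ∣ 2) := fun h => absurd (Nat.le_of_dvd two_pos h) (by omega)
    intro h
    apply hd
    rwa [show (2 : ZMod p) = ((2 : ℕ) : ZMod p) by norm_cast,
      ZMod.natCast_eq_zero_iff] at h
  -- square the sum
  have hconj : (starRingEnd ℂ) T = ∑ y, ψ (-(g y)) := by
    rw [hT, map_sum]; exact Finset.sum_congr rfl fun y _ => char_conj ψ (g y)
  have hsq : T * (starRingEnd ℂ) T = ∑ x, ∑ y, ψ (g x - g y) := by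
    rw [hconj, hT, Finset.sum_mul_sum]
    refine Finset.sum_congr rfl fun x _ => Finset.sum_congr rfl fun y _ => ?_
    rw [← map_add_eq_mul, sub_eq_add_neg]
  have hswap : ∑ x, ∑ y, ψ (g x - g y)
      = ∑ y : Fin n → ZMod p, ∑ h : Fin n → ZMod p, ψ (g (y + h) - g y) := by
    rw [Finset.sum_comm]
    exact Finset.sum_congr rfl fun y _ =>
      (Equiv.sum_comp (Equiv.addLeft y) (fun x => ψ (g x - g y))).symm
  have hhy : ∀ y h : Fin n → ZMod p, h ⬝ᵥ A *ᵥ y = (A *ᵥ h) ⬝ᵥ y := by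
    intro y h
    rw [dotProduct_mulVec, ← Matrix.mulVec_transpose, hA.eq]
  have hexpand : ∀ y h : Fin n → ZMod p,
      g (y + h) - g y = ((2 : ZMod p) • (A *ᵥ h)) ⬝ᵥ y + g h := by
    intro y h
    simp only [hg, Matrix.mulVec_add, add_dotProduct, dotProduct_add,
      map_add, smul_dotProduct, two_smul, dotProduct_comm y (A *ᵥ h), hhy y h]
    ring
  have hinner : ∀ h : Fin n → ZMod p,
      ∑ y : Fin n → ZMod p, ψ (((2 : ZMod p) • (A *ᵥ h)) ⬝ᵥ y + g h)
        = (if A *ᵥ h = 0 then (p : ℂ) ^ n else 0) * ψ (g h) := by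
    intro h
    simp_rw [map_add_eq_mul]
    rw [← Finset.sum_mul, sum_char_dot ψ hψ]
    congr 2
    simp [smul_eq_zero, h2]
  have hTT : T * (starRingEnd ℂ) T
      = ∑ h : Fin n → ZMod p, (if A *ᵥ h = 0 then (p : ℂ) ^ n else 0) * ψ (g h) := by
    rw [hsq, hswap]
    simp_rw [hexpand]
    rw [Finset.sum_comm]
    exact Finset.sum_congr rfl fun h _ => hinner h
  -- kernel cardinality
  set K := LinearMap.ker A.mulVecLin with hK
  have hrankn : A.rank + finrank (ZMod p) K = n := by
    have hdef : A.rank = finrank (ZMod p) (LinearMap.range A.mulVecLin) := rfl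
    have h := LinearMap.finrank_range_add_finrank_ker A.mulVecLin
    rw [Module.finrank_fin_fun] at h
    rw [hdef, hK]; exact h
  have hrle : A.rank ≤ n := by omega
  have hcard : ((Finset.univ.filter (fun h : Fin n → ZMod p => A *ᵥ h = 0)).card : ℝ)
      = (p : ℝ) ^ (n - A.rank) := by
    have e1 : (Finset.univ.filter (fun h : Fin n → ZMod p => A *ᵥ h = 0)).card
        = Fintype.card {h : Fin n → ZMod p // A *ᵥ h = 0} := (Fintype.card_subtype _).symm
    have e2 : Fintype.card {h : Fin n → ZMod p // A *ᵥ h = 0} = Fintype.card K :=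
      Fintype.card_congr (Equiv.subtypeEquivRight fun h => by
        simp [hK, LinearMap.mem_ker, Matrix.mulVecLin_apply])
    have e3 : Fintype.card K = p ^ (finrank (ZMod p) K) := by
      rw [card_eq_pow_finrank (K := ZMod p), ZMod.card]
    have e4 : finrank (ZMod p) K = n - A.rank := by omega
    rw [e1, e2, e3, e4]; push_cast; ring
  -- norm bound
  have hnormsq : ‖T‖ ^ 2 = ‖T * (starRingEnd ℂ) T‖ := by
    rw [norm_mul, RCLike.norm_conj, sq]
  have hb1 : ‖T‖ ^ 2 ≤ ((Finset.univ.filter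
      (fun h : Fin n → ZMod p => A *ᵥ h = 0)).card : ℝ) * (p : ℝ) ^ n := by
    rw [hnormsq, hTT]
    calc ‖∑ h : Fin n → ZMod p, (if A *ᵥ h = 0 then (p : ℂ) ^ n else 0) * ψ (g h)‖
        ≤ ∑ h : Fin n → ZMod p, ‖(if A *ᵥ h = 0 then (p : ℂ) ^ n else 0) * ψ (g h)‖ :=
          norm_sum_le _ _
      _ = ∑ h : Fin n → ZMod p, (if A *ᵥ h = 0 then (p : ℝ) ^ n else 0) := by
          refine Finset.sum_congr rfl fun h _ => ?_
          rw [norm_mul, char_norm_one, mul_one]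
          split_ifs <;> simp
      _ = _ := by
          rw [← Finset.sum_filter, Finset.sum_const, nsmul_eq_mul]
  set X : ℝ := (p : ℝ) ^ ((n : ℝ) - r / 2) with hX
  have hppos : (0 : ℝ) < p := by positivity
  have hX2 : X ^ 2 = (p : ℝ) ^ (2 * n - r : ℕ) := by
    have hr2n : r ≤ 2 * n := le_trans hr (by omega)
    rw [hX, ← Real.rpow_natCast ((p : ℝ) ^ ((n : ℝ) - r / 2)) 2,
      ← Real.rpow_natCast (p : ℝ) (2 * n - r), ← Real.rpow_mul hppos.le]
    congr 1
    push_cast [Nat.cast_sub hr2n]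
    ring
  have hXpos : 0 < X := Real.rpow_pos_of_pos hppos _
  have hfin : ‖T‖ ^ 2 ≤ X ^ 2 := by
    calc ‖T‖ ^ 2 ≤ ((Finset.univ.filter
        (fun h : Fin n → ZMod p => A *ᵥ h = 0)).card : ℝ) * (p : ℝ) ^ n := hb1
      _ = (p : ℝ) ^ (n - A.rank) * (p : ℝ) ^ n := by rw [hcard]
      _ = (p : ℝ) ^ (n - A.rank + n) := (pow_add _ _ _).symm
      _ ≤ (p : ℝ) ^ (2 * n - r : ℕ) := by
          apply pow_le_pow_right₀ (by exact_mod_cast hp1.le)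
          omega
      _ = X ^ 2 := hX2.symm
  have hTX : ‖T‖ ≤ X := by
    calc ‖T‖ = Real.sqrt (‖T‖ ^ 2) := (Real.sqrt_sq (norm_nonneg T)).symm
      _ ≤ Real.sqrt (X ^ 2) := Real.sqrt_le_sqrt hfin
      _ = X := Real.sqrt_sq hXpos.le
  exact hTX

end aux

theorem atom_size (p n l q : ℕ) (hp : p.Prime) (hp2 : 2 < p) [Fact p.Prime]
    (L : Fin l → ((Fin n → ZMod p) →ₗ[ZMod p] ZMod p))
    (hL : LinearIndependent (ZMod p) L)
    (M : Fin q → Matrix (Fin n) (Fin n) (ZMod p))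
    (hsymm : ∀ i, (M i).IsSymm)
    (r : ℕ)
    (hrank : ∀ lam : Fin q → ZMod p, lam ≠ 0 → r ≤ (∑ i, lam i • M i).rank)
    (c : Fin l → ZMod p) (d : Fin q → ZMod p) :
    |((Nat.card {x : Fin n → ZMod p |
        (∀ j, L j x = c j) ∧ ∀ i, x ⬝ᵥ (M i).mulVec x = d i} : ℕ) : ℝ)
      - (p : ℝ) ^ ((n : ℝ) - (l + q))|
      ≤ (p : ℝ) ^ ((n : ℝ) - r / 2) := by
  classical
  have hp1 : 1 < p := hp.one_lt
  have hpne : p ≠ 0 := hp.pos.ne'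
  have hppos : (0 : ℝ) < p := by positivity
  haveI : NeZero p := ⟨hpne⟩
  -- the additive character
  have hζ := Complex.isPrimitiveRoot_exp p hpne
  set ψ : AddChar (ZMod p) ℂ := AddChar.zmodChar p hζ.pow_eq_one with hψdef
  have hψ : ψ.IsPrimitive := AddChar.zmodChar_primitive_of_primitive_root p hζ
  -- notation
  set V := (Fin n → ZMod p)
  set P : V → Prop := fun x => (∀ j, L j x = c j) ∧ ∀ i, x ⬝ᵥ (M i).mulVec x = d i with hP
  set S : (Fin l → ZMod p) → (Fin q → ZMod p) → ℂ := fun μ lam =>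
    ∑ x : V, ψ ((∑ j, μ j * (L j x - c j)) + (∑ i, lam i * (x ⬝ᵥ (M i).mulVec x - d i)))
    with hS
  -- Step 1 : counting identity
  have hcount : ((Nat.card {x : V | P x} : ℕ) : ℂ) * (p : ℂ) ^ (l + q)
      = ∑ lam : Fin q → ZMod p, ∑ μ : Fin l → ZMod p, S μ lam := by
    have hperx : ∀ x : V,
        (∑ lam : Fin q → ZMod p, ∑ μ : Fin l → ZMod p,
          ψ ((∑ j, μ j * (L j x - c j)) + (∑ i, lam i * (x ⬝ᵥ (M i).mulVec x - d i))))
        = if P x then (p : ℂ) ^ (l + q) else 0 := by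
      intro x
      have : ∀ lam : Fin q → ZMod p, ∀ μ : Fin l → ZMod p,
          ψ ((∑ j, μ j * (L j x - c j)) + (∑ i, lam i * (x ⬝ᵥ (M i).mulVec x - d i)))
          = ψ (∑ j, μ j * (L j x - c j)) * ψ (∑ i, lam i * (x ⬝ᵥ (M i).mulVec x - d i)) :=
        fun lam μ => map_add_eq_mul ψ _ _
      simp_rw [this]
      simp_rw [← Finset.sum_mul, ← Finset.mul_sum]
      rw [mul_comm]
      rw [sum_char_pi ψ hψ (fun i => x ⬝ᵥ (M i).mulVec x - d i),
        sum_char_pi ψ hψ (fun j => L j x - c j)]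
      have e1 : ((fun j => L j x - c j) = 0) ↔ ∀ j, L j x = c j := by
        rw [funext_iff]; simp [sub_eq_zero]
      have e2 : ((fun i => x ⬝ᵥ (M i).mulVec x - d i) = 0) ↔
          ∀ i, x ⬝ᵥ (M i).mulVec x = d i := by
        rw [funext_iff]; simp [sub_eq_zero]
      by_cases h : P x
      · rw [if_pos (e2.mpr h.2), if_pos (e1.mpr h.1), if_pos h, pow_add, mul_comm]
      · rw [if_neg h]
        by_cases h1 : ∀ j, L j x = c j
        · have h2 : ¬ ∀ i, x ⬝ᵥ (M i).mulVec x = d i := by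
            intro h2
            exact h (by rw [hP]; exact ⟨h1, h2⟩)
          have h2' : ¬((fun i => x ⬝ᵥ (M i).mulVec x - d i) = 0) := by simpa [e2] using h2
          rw [if_neg h2', zero_mul]
        · have h1' : ¬((fun j => L j x - c j) = 0) := by simpa [e1] using h1
          rw [if_neg h1', mul_zero]
    have hswap : ∑ lam : Fin q → ZMod p, ∑ μ : Fin l → ZMod p, S μ lam
        = ∑ x : V, ∑ lam : Fin q → ZMod p, ∑ μ : Fin l → ZMod p,
          ψ ((∑ j, μ j * (L j x - c j)) + (∑ i, lam i * (x ⬝ᵥ (M i).mulVec x - d i))) := by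
      simp only [hS]
      exact (Finset.sum_congr rfl fun lam _ => Finset.sum_comm).trans Finset.sum_comm
    rw [hswap]
    simp_rw [hperx]
    rw [← Finset.sum_filter, Finset.sum_const, nsmul_eq_mul]
    congr 1
    have : Nat.card {x : V | P x} = (Finset.univ.filter P).card := by
      rw [Nat.card_eq_fintype_card, Fintype.card_subtype]
      simp [Set.mem_setOf_eq]
    rw [this]
  -- Step 2 : the lam = 0 row
  have hrow0 : ∑ μ : Fin l → ZMod p, S μ 0 = (p : ℂ) ^ n := by
    have key : ∀ μ : Fin l → ZMod p, S μ 0 =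
        ψ (-∑ j, μ j * c j) * (if (∑ j, μ j • L j : (Fin n → ZMod p) →ₗ[ZMod p] ZMod p) = 0
          then (p : ℂ) ^ n else 0) := by
      intro μ
      simp only [hS]
      rw [← sum_char_linear ψ hψ (∑ j, μ j • L j), Finset.mul_sum]
      refine Finset.sum_congr rfl fun x _ => ?_
      rw [← map_add_eq_mul]
      congr 1
      simp only [Pi.zero_apply, zero_mul, Finset.sum_const_zero, add_zero,
        LinearMap.sum_apply, LinearMap.smul_apply, smul_eq_mul, mul_sub,
        Finset.sum_sub_distrib]
      ring
    simp_rw [key]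
    rw [Finset.sum_eq_single (0 : Fin l → ZMod p)]
    · simp
    · intro μ _ hμ
      have hne : (∑ j, μ j • L j : (Fin n → ZMod p) →ₗ[ZMod p] ZMod p) ≠ 0 := by
        intro h0
        exact hμ (funext fun j => Fintype.linearIndependent_iff.mp hL μ h0 j)
      rw [if_neg hne, mul_zero]
    · intro h; exact absurd (Finset.mem_univ 0) h
  -- Step 3 : bound for lam ≠ 0
  have hbound : ∀ lam : Fin q → ZMod p, lam ≠ 0 → ∀ μ : Fin l → ZMod p,
      ‖S μ lam‖ ≤ (p : ℝ) ^ ((n : ℝ) - r / 2) := by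
    intro lam hlam μ
    set A : Matrix (Fin n) (Fin n) (ZMod p) := ∑ i, lam i • M i with hA
    have hAsymm : A.IsSymm := by
      show Aᵀ = A
      rw [hA, Matrix.transpose_sum]
      exact Finset.sum_congr rfl fun i _ => by rw [Matrix.transpose_smul, (hsymm i).eq]
    set φ : (Fin n → ZMod p) →ₗ[ZMod p] ZMod p := ∑ j, μ j • L j with hφ
    set e : ZMod p := -(∑ j, μ j * c j) - ∑ i, lam i * d i with he
    have hAx : ∀ x : V, A *ᵥ x = ∑ i, lam i • ((M i) *ᵥ x) := by
      intro x
      rw [hA, matrix_sum_mulVec]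
      exact Finset.sum_congr rfl fun i _ => Matrix.smul_mulVec _ _ _
    have h1 : ∀ x : V, x ⬝ᵥ A.mulVec x = ∑ i, lam i * (x ⬝ᵥ (M i).mulVec x) := by
      intro x
      rw [show A.mulVec x = A *ᵥ x from rfl, hAx x, dotProduct_finset_sum]
      exact Finset.sum_congr rfl fun i _ => by
        rw [dotProduct_smul, smul_eq_mul]
    have hphase : ∀ x : V,
        (∑ j, μ j * (L j x - c j)) + (∑ i, lam i * (x ⬝ᵥ (M i).mulVec x - d i))
        = (x ⬝ᵥ A.mulVec x + φ x) + e := by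
      intro x
      rw [h1 x, he, hφ]
      simp only [LinearMap.sum_apply, LinearMap.smul_apply, smul_eq_mul, mul_sub,
        Finset.sum_sub_distrib]
      ring
    have hSe : S μ lam = ψ e * ∑ x : V, ψ (x ⬝ᵥ A.mulVec x + φ x) := by
      simp only [hS]
      rw [Finset.mul_sum]
      refine Finset.sum_congr rfl fun x _ => ?_
      rw [hphase x, map_add_eq_mul, mul_comm]
    rw [hSe, norm_mul, char_norm_one, one_mul]
    exact quad_sum_bound hp2 ψ hψ A hAsymm φ (hrank lam hlam)
  -- Step 4 : assemble
  set X : ℝ := (p : ℝ) ^ ((n : ℝ) - r / 2) with hX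
  have hXnn : 0 ≤ X := (Real.rpow_pos_of_pos hppos _).le
  set T : ℂ := ∑ lam : Fin q → ZMod p, ∑ μ : Fin l → ZMod p, S μ lam with hT
  have hsplit : T - (p : ℂ) ^ n
      = ∑ lam ∈ Finset.univ.erase (0 : Fin q → ZMod p),
          ∑ μ : Fin l → ZMod p, S μ lam := by
    rw [hT, ← Finset.sum_erase_add _ _ (Finset.mem_univ (0 : Fin q → ZMod p)), hrow0,
      add_sub_cancel_right]
  have hnorm1 : ‖T - (p : ℂ) ^ n‖ ≤ (p : ℝ) ^ q * ((p : ℝ) ^ l * X) := by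
    rw [hsplit]
    have hrowb : ∀ lam ∈ Finset.univ.erase (0 : Fin q → ZMod p),
        ‖∑ μ : Fin l → ZMod p, S μ lam‖ ≤ (p : ℝ) ^ l * X := by
      intro lam hlam
      have hne : lam ≠ 0 := Finset.ne_of_mem_erase hlam
      calc ‖∑ μ : Fin l → ZMod p, S μ lam‖ ≤ ∑ μ : Fin l → ZMod p, ‖S μ lam‖ :=
            norm_sum_le _ _
        _ ≤ ∑ _μ : Fin l → ZMod p, X := Finset.sum_le_sum fun μ _ => hbound lam hne μ
        _ = (Fintype.card (Fin l → ZMod p) : ℝ) * X := by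
            rw [Finset.sum_const, nsmul_eq_mul, Finset.card_univ]
        _ = (p : ℝ) ^ l * X := by
            congr 2
            simp [ZMod.card]
    calc ‖∑ lam ∈ Finset.univ.erase (0 : Fin q → ZMod p), ∑ μ : Fin l → ZMod p, S μ lam‖
        ≤ ∑ lam ∈ Finset.univ.erase (0 : Fin q → ZMod p), ‖∑ μ : Fin l → ZMod p, S μ lam‖ :=
          norm_sum_le _ _
      _ ≤ ∑ _lam ∈ Finset.univ.erase (0 : Fin q → ZMod p), ((p : ℝ) ^ l * X) :=
          Finset.sum_le_sum hrowb
      _ = ((Finset.univ.erase (0 : Fin q → ZMod p)).card : ℝ) * ((p : ℝ) ^ l * X) := by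
          rw [Finset.sum_const, nsmul_eq_mul]
      _ ≤ (p : ℝ) ^ q * ((p : ℝ) ^ l * X) := by
          refine mul_le_mul_of_nonneg_right ?_ (by positivity)
          have h1 : (Finset.univ.erase (0 : Fin q → ZMod p)).card ≤ Fintype.card (Fin q → ZMod p) := by
            exact le_trans (Finset.card_erase_le) (Finset.card_le_univ _)
          have h2 : Fintype.card (Fin q → ZMod p) = p ^ q := by simp [ZMod.card]
          exact_mod_cast h2 ▸ h1
  -- translate back to the reals
  have hpcne : ((p : ℂ)) ^ (l + q) ≠ 0 := pow_ne_zero _ (by exact_mod_cast hpne)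
  have hcard : ((Nat.card {x : V | P x} : ℕ) : ℂ) = T / (p : ℂ) ^ (l + q) := by
    rw [← hcount, mul_div_assoc, div_self hpcne, mul_one]
  have hb : (p : ℝ) ^ ((n : ℝ) - (l + q)) = (p : ℝ) ^ n / (p : ℝ) ^ (l + q) := by
    rw [Real.rpow_sub hppos]
    congr 1
    · rw [Real.rpow_natCast]
    · rw [show ((l : ℝ) + q) = ((l + q : ℕ) : ℝ) by push_cast; ring, Real.rpow_natCast]
  have habs : |((Nat.card {x : V | P x} : ℕ) : ℝ) - (p : ℝ) ^ ((n : ℝ) - (l + q))|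
      = ‖((Nat.card {x : V | P x} : ℕ) : ℂ) - (p : ℂ) ^ n / (p : ℂ) ^ (l + q)‖ := by
    rw [show ((Nat.card {x : V | P x} : ℕ) : ℂ) - (p : ℂ) ^ n / (p : ℂ) ^ (l + q)
        = ((((Nat.card {x : V | P x} : ℕ) : ℝ) - (p : ℝ) ^ n / (p : ℝ) ^ (l + q) : ℝ) : ℂ) by
      push_cast; ring]
    rw [Complex.norm_real, hb, Real.norm_eq_abs]
  rw [habs, hcard, div_sub_div_same, norm_div]
  have hnormden : ‖(p : ℂ) ^ (l + q)‖ = (p : ℝ) ^ (l + q) := by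
    rw [norm_pow, Complex.norm_natCast]
  rw [hnormden, div_le_iff₀ (by positivity)]
  calc ‖T - (p : ℂ) ^ n‖ ≤ (p : ℝ) ^ q * ((p : ℝ) ^ l * X) := hnorm1
    _ = X * (p : ℝ) ^ (l + q) := by rw [pow_add]; ring
end

section
/- Let B be a quadratic factor on F_p^n defined by l linearly independent linear forms and q quadratic forms x^T M_i x such that every nonzero linear combination of M_1,...,M_q has rank n. If l + q < n/2, then every atom of B is non-empty. -/
open Matrix Finset

section aux
variable {p : ℕ} [Fact p.Prime]

lemma psi_norm (z : ZMod p) : ‖ZMod.stdAddChar z‖ = 1 := by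
  rw [ZMod.stdAddChar_apply]
  exact Circle.norm_coe _

lemma psi_conj (z : ZMod p) :
    (starRingEnd ℂ) (ZMod.stdAddChar z) = ZMod.stdAddChar (-z) := by
  rw [AddChar.map_neg_eq_inv, Complex.inv_eq_conj (psi_norm z)]

lemma psi_map_sum {ι : Type*} (s : Finset ι) (f : ι → ZMod p) :
    ZMod.stdAddChar (∑ i ∈ s, f i) = ∏ i ∈ s, ZMod.stdAddChar (f i) := by
  classical
  induction s using Finset.induction with
  | empty => simp
  | insert _ _ h ih => rw [Finset.sum_insert h, Finset.prod_insert h,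
      AddChar.map_add_eq_mul, ih]

/-- scalar orthogonality -/
lemma psi_sum_scalar (b : ZMod p) :
    ∑ t : ZMod p, ZMod.stdAddChar (t * b) = if b = 0 then (p : ℂ) else 0 := by
  classical
  rw [AddChar.sum_mulShift b (ZMod.isPrimitive_stdAddChar p)]
  simp [ZMod.card]

/-- vector orthogonality -/
lemma psi_sum_vec {m : ℕ} (v : Fin m → ZMod p) :
    ∑ t : Fin m → ZMod p, ZMod.stdAddChar (t ⬝ᵥ v)
      = if v = 0 then (p : ℂ) ^ m else 0 := by
  classical
  have : ∀ t : Fin m → ZMod p, ZMod.stdAddChar (t ⬝ᵥ v)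
      = ∏ i, ZMod.stdAddChar (t i * v i) := fun t => psi_map_sum _ _
  simp_rw [this]
  rw [← Fintype.piFinset_univ, Finset.sum_prod_piFinset Finset.univ (fun i a => ZMod.stdAddChar (a * v i))]
  by_cases hv : v = 0
  · simp [hv, psi_sum_scalar, Finset.prod_const, ZMod.card]
  · obtain ⟨i, hi⟩ : ∃ i, v i ≠ 0 := by
      by_contra h; push_neg at h; exact hv (funext h)
    rw [if_neg hv]
    apply Finset.prod_eq_zero (Finset.mem_univ i)
    rw [psi_sum_scalar, if_neg hi]

end aux

section aux2
variable {p : ℕ} [Fact p.Prime]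

lemma mulVec_inj {n : ℕ} {A : Matrix (Fin n) (Fin n) (ZMod p)} (h : A.rank = n) :
    Function.Injective A.mulVec := by
  have hr : LinearMap.range A.mulVecLin = ⊤ := by
    apply Submodule.eq_top_of_finrank_eq
    rw [← Matrix.rank, h, Module.finrank_fintype_fun_eq_card, Fintype.card_fin]
  have hs : Function.Surjective A.mulVecLin := LinearMap.range_eq_top.mp hr
  have hi := (LinearMap.injective_iff_surjective (f := A.mulVecLin)).mpr hs
  intro x y hxy
  exact hi (by simpa [Matrix.mulVecLin_apply] using hxy)

lemma dot_symm {n : ℕ} {A : Matrix (Fin n) (Fin n) (ZMod p)} (hA : A.IsSymm)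
    (u w : Fin n → ZMod p) : u ⬝ᵥ A.mulVec w = w ⬝ᵥ A.mulVec u := by
  rw [Matrix.dotProduct_mulVec, ← Matrix.mulVec_transpose, hA.eq, dotProduct_comm]

lemma quad_sum {n : ℕ} (hp2 : 2 < p) {A : Matrix (Fin n) (Fin n) (ZMod p)} (hA : A.IsSymm)
    (hinj : Function.Injective A.mulVec) (b : Fin n → ZMod p) :
    (∑ x : Fin n → ZMod p, ZMod.stdAddChar (x ⬝ᵥ A.mulVec x + b ⬝ᵥ x)) *
      (∑ y : Fin n → ZMod p, ZMod.stdAddChar (-(y ⬝ᵥ A.mulVec y + b ⬝ᵥ y)))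
      = (p : ℂ) ^ n := by
  classical
  rw [Finset.sum_mul_sum, Finset.sum_comm]
  have key : ∀ y : Fin n → ZMod p, ∀ h : Fin n → ZMod p,
      ((y + h) ⬝ᵥ A.mulVec (y + h) + b ⬝ᵥ (y + h)) + (-(y ⬝ᵥ A.mulVec y + b ⬝ᵥ y))
        = (h ⬝ᵥ A.mulVec h + b ⬝ᵥ h) + y ⬝ᵥ ((2 : ZMod p) • A.mulVec h) := by
    intro y h
    have hsym := dot_symm hA h y
    simp only [Matrix.mulVec_add, dotProduct_add, add_dotProduct,
      dotProduct_smul, smul_eq_mul]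
    rw [← hsym]
    ring
  calc ∑ y : Fin n → ZMod p, ∑ x : Fin n → ZMod p,
        ZMod.stdAddChar (x ⬝ᵥ A.mulVec x + b ⬝ᵥ x) *
          ZMod.stdAddChar (-(y ⬝ᵥ A.mulVec y + b ⬝ᵥ y))
      = ∑ y : Fin n → ZMod p, ∑ h : Fin n → ZMod p,
          ZMod.stdAddChar (h ⬝ᵥ A.mulVec h + b ⬝ᵥ h) *
            ZMod.stdAddChar (y ⬝ᵥ ((2 : ZMod p) • A.mulVec h)) := by
        refine Finset.sum_congr rfl fun y _ => ?_
        rw [← Equiv.sum_comp (Equiv.addLeft y)]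
        refine Finset.sum_congr rfl fun h _ => ?_
        rw [← AddChar.map_add_eq_mul, ← AddChar.map_add_eq_mul, Equiv.coe_addLeft, key y h]
    _ = ∑ h : Fin n → ZMod p,
          ZMod.stdAddChar (h ⬝ᵥ A.mulVec h + b ⬝ᵥ h) *
            ∑ y : Fin n → ZMod p, ZMod.stdAddChar (y ⬝ᵥ ((2 : ZMod p) • A.mulVec h)) := by
        rw [Finset.sum_comm]
        exact Finset.sum_congr rfl fun h _ => (Finset.mul_sum _ _ _).symm
    _ = (p : ℂ) ^ n := by
        have hv : ∀ h : Fin n → ZMod p, ((2 : ZMod p) • A.mulVec h = 0) ↔ h = 0 := by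
          intro h
          constructor
          · intro hz
            have h2 : (2 : ZMod p) ≠ 0 := by
              have : ((2 : ℕ) : ZMod p) ≠ 0 := by
                rw [Ne, ZMod.natCast_eq_zero_iff]
                intro hd
                have := Nat.le_of_dvd (by norm_num) hd
                omega
              exact_mod_cast this
            have hAh : A.mulVec h = 0 := by
              funext i
              have := congrFun hz i
              simp only [Pi.smul_apply, smul_eq_mul, Pi.zero_apply] at this
              exact (mul_eq_zero.mp this).resolve_left h2
            exact hinj (a₁ := h) (a₂ := 0) (by simpa [Matrix.mulVec_zero] using hAh)
          · intro hz; simp [hz, Matrix.mulVec_zero]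
        simp_rw [psi_sum_vec]
        have hcong : ∀ h : Fin n → ZMod p,
            (if (2 : ZMod p) • A.mulVec h = 0 then (p:ℂ) ^ n else 0)
              = (if h = 0 then (p:ℂ) ^ n else 0) := fun h => by simp only [hv h]
        simp_rw [hcong, mul_ite, mul_zero]
        rw [Finset.sum_ite_eq' Finset.univ (0 : Fin n → ZMod p)
          (fun h => ZMod.stdAddChar (h ⬝ᵥ A.mulVec h + b ⬝ᵥ h) * (p:ℂ) ^ n)]
        simp
end aux2

section aux3
variable {p : ℕ} [Fact p.Prime]

lemma quad_norm {n : ℕ} (hp2 : 2 < p) {A : Matrix (Fin n) (Fin n) (ZMod p)} (hA : A.IsSymm)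
    (hinj : Function.Injective A.mulVec) (b : Fin n → ZMod p) :
    ‖∑ x : Fin n → ZMod p, ZMod.stdAddChar (x ⬝ᵥ A.mulVec x + b ⬝ᵥ x)‖
      = Real.sqrt ((p : ℝ) ^ n) := by
  set S := ∑ x : Fin n → ZMod p, ZMod.stdAddChar (x ⬝ᵥ A.mulVec x + b ⬝ᵥ x) with hS
  have hconj : (starRingEnd ℂ) S
      = ∑ y : Fin n → ZMod p, ZMod.stdAddChar (-(y ⬝ᵥ A.mulVec y + b ⬝ᵥ y)) := by
    rw [hS, map_sum]
    exact Finset.sum_congr rfl fun y _ => psi_conj _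
  have hq := quad_sum hp2 hA hinj b
  rw [← hS, ← hconj] at hq
  have hns : (Complex.normSq S : ℂ) = ((p : ℝ) ^ n : ℝ) := by
    rw [← Complex.mul_conj, hq]; push_cast; ring
  have hns' : Complex.normSq S = (p : ℝ) ^ n := by exact_mod_cast hns
  rw [Complex.norm_def, hns']

end aux3

theorem atoms_nonempty (p n l q : ℕ) (hp : p.Prime) (hp2 : 2 < p) [Fact p.Prime]
    (L : Fin l → ((Fin n → ZMod p) →ₗ[ZMod p] ZMod p))
    (hL : LinearIndependent (ZMod p) L)
    (M : Fin q → Matrix (Fin n) (Fin n) (ZMod p))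
    (hsymm : ∀ i, (M i).IsSymm)
    (hrank : ∀ lam : Fin q → ZMod p, lam ≠ 0 → (∑ i, lam i • M i).rank = n)
    (hlq : (l + q : ℝ) < (n : ℝ) / 2) :
    ∀ (c : Fin l → ZMod p) (d : Fin q → ZMod p),
      ∃ x : Fin n → ZMod p,
        (∀ j, L j x = c j) ∧ ∀ i, x ⬝ᵥ (M i).mulVec x = d i := by
  classical
  intro c d
  set ψ := ZMod.stdAddChar (N := p) with hψ
  -- vector of coefficients of the linear form ∑ j, t j * L j
  set bvec : (Fin l → ZMod p) → (Fin n → ZMod p) :=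
    fun t i => ∑ j, t j * L j (fun k => if i = k then 1 else 0) with hbvec
  have hbv : ∀ (t : Fin l → ZMod p) (x : Fin n → ZMod p),
      ∑ j, t j * L j x = bvec t ⬝ᵥ x := by
    intro t x
    simp only [hbvec, dotProduct, Finset.sum_mul]
    rw [Finset.sum_comm]
    refine Finset.sum_congr rfl fun j _ => ?_
    rw [LinearMap.pi_apply_eq_sum_univ (L j) x, Finset.mul_sum]
    exact Finset.sum_congr rfl fun i _ => by simp [smul_eq_mul]; ring
  have hbv0 : ∀ t : Fin l → ZMod p, t ≠ 0 → bvec t ≠ 0 := by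
    intro t ht hbt
    apply ht
    have hzero : ∀ x : Fin n → ZMod p, ∑ j, t j • L j x = 0 := by
      intro x
      have := hbv t x
      rw [hbt] at this
      simpa [smul_eq_mul, zero_dotProduct] using this
    have hsum0 : (∑ j, t j • L j) = 0 := by
      apply LinearMap.ext
      intro x
      rw [LinearMap.sum_apply]
      simpa [LinearMap.smul_apply, smul_eq_mul] using hzero x
    exact funext fun j => Fintype.linearIndependent_iff.mp hL t hsum0 j
  set Ms : (Fin q → ZMod p) → Matrix (Fin n) (Fin n) (ZMod p) :=
    fun s => ∑ i, s i • M i with hMsdef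
  have hMs : ∀ (s : Fin q → ZMod p) (x : Fin n → ZMod p),
      ∑ i, s i * (x ⬝ᵥ (M i).mulVec x) = x ⬝ᵥ (Ms s).mulVec x := by
    intro s x
    simp only [hMsdef]
    induction (Finset.univ : Finset (Fin q)) using Finset.induction with
    | empty => simp
    | insert _ _ h ih =>
      rw [Finset.sum_insert h, Finset.sum_insert h, Matrix.add_mulVec,
        dotProduct_add, ih, Matrix.smul_mulVec,
        dotProduct_smul, smul_eq_mul]
  have hMsymm : ∀ s, (Ms s).IsSymm := by
    intro s
    unfold Matrix.IsSymm
    simp only [hMsdef, Matrix.transpose_sum, Matrix.transpose_smul]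
    exact Finset.sum_congr rfl fun i _ => by rw [(hsymm i).eq]
  -- The atom as a finset
  set Sol : Finset (Fin n → ZMod p) :=
    Finset.univ.filter (fun x => (fun j => L j x - c j) = 0 ∧
      (fun i => x ⬝ᵥ (M i).mulVec x - d i) = 0) with hSol
  set U : (Fin l → ZMod p) → (Fin q → ZMod p) → ℂ :=
    fun t s => ∑ x : Fin n → ZMod p, ψ (x ⬝ᵥ (Ms s).mulVec x + bvec t ⬝ᵥ x) with hU
  set G : ((Fin l → ZMod p) × (Fin q → ZMod p)) → ℂ :=
    fun u => U u.1 u.2 * ψ (-(u.1 ⬝ᵥ c + u.2 ⬝ᵥ d)) with hG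
  have hMs0 : Ms 0 = 0 := by simp [hMsdef]
  have hbvec0 : bvec 0 = 0 := by funext i; simp [hbvec]
  have phase : ∀ (x : Fin n → ZMod p) (t : Fin l → ZMod p) (s : Fin q → ZMod p),
      ψ (t ⬝ᵥ (fun j => L j x - c j)) * ψ (s ⬝ᵥ (fun i => x ⬝ᵥ (M i).mulVec x - d i))
        = ψ (x ⬝ᵥ (Ms s).mulVec x + bvec t ⬝ᵥ x) * ψ (-(t ⬝ᵥ c + s ⬝ᵥ d)) := by
    intro x t s
    rw [← AddChar.map_add_eq_mul, ← AddChar.map_add_eq_mul]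
    congr 1
    have h1 : t ⬝ᵥ (fun j => L j x - c j) = bvec t ⬝ᵥ x - t ⬝ᵥ c := by
      show ∑ j, t j * (L j x - c j) = _
      simp only [mul_sub, Finset.sum_sub_distrib, hbv]
      rfl
    have h2 : s ⬝ᵥ (fun i => x ⬝ᵥ (M i).mulVec x - d i)
        = x ⬝ᵥ (Ms s).mulVec x - s ⬝ᵥ d := by
      show ∑ i, s i * (x ⬝ᵥ (M i).mulVec x - d i) = _
      simp only [mul_sub, Finset.sum_sub_distrib, hMs]
      rfl
    rw [h1, h2]; ring
  -- main identity
  have main : (Sol.card : ℂ) * ((p : ℂ) ^ l * (p : ℂ) ^ q)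
      = ∑ u : (Fin l → ZMod p) × (Fin q → ZMod p), G u := by
    have step1 : ∑ x : Fin n → ZMod p, ∑ t : Fin l → ZMod p, ∑ s : Fin q → ZMod p,
        ψ (t ⬝ᵥ (fun j => L j x - c j)) * ψ (s ⬝ᵥ (fun i => x ⬝ᵥ (M i).mulVec x - d i))
        = (Sol.card : ℂ) * ((p : ℂ) ^ l * (p : ℂ) ^ q) := by
      have hx : ∀ x : Fin n → ZMod p, ∑ t : Fin l → ZMod p, ∑ s : Fin q → ZMod p,
          ψ (t ⬝ᵥ (fun j => L j x - c j)) * ψ (s ⬝ᵥ (fun i => x ⬝ᵥ (M i).mulVec x - d i))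
          = if ((fun j => L j x - c j) = 0 ∧ (fun i => x ⬝ᵥ (M i).mulVec x - d i) = 0)
              then (p : ℂ) ^ l * (p : ℂ) ^ q else 0 := by
        intro x
        rw [← Finset.sum_mul_sum, hψ, psi_sum_vec, psi_sum_vec]
        by_cases h1 : (fun j => L j x - c j) = 0 <;>
          by_cases h2 : (fun i => x ⬝ᵥ (M i).mulVec x - d i) = 0 <;>
          simp [h1, h2]
      rw [Finset.sum_congr rfl fun x _ => hx x, ← Finset.sum_filter, ← hSol,
        Finset.sum_const, nsmul_eq_mul]
    have step2 : ∀ (t : Fin l → ZMod p) (s : Fin q → ZMod p),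
        ∑ x : Fin n → ZMod p,
          ψ (t ⬝ᵥ (fun j => L j x - c j)) * ψ (s ⬝ᵥ (fun i => x ⬝ᵥ (M i).mulVec x - d i))
          = G (t, s) := by
      intro t s
      rw [Finset.sum_congr rfl fun x _ => phase x t s, ← Finset.sum_mul]
    rw [Fintype.sum_prod_type, ← step1, Finset.sum_comm]
    refine Finset.sum_congr rfl fun t _ => ?_
    rw [Finset.sum_comm]
    exact Finset.sum_congr rfl fun s _ => step2 t s
  have hG00 : G (0, 0) = (p : ℂ) ^ n := by
    have hU00 : U 0 0 = (p : ℂ) ^ n := by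
      rw [hU]
      simp only [hMs0, hbvec0, Matrix.zero_mulVec, dotProduct_zero,
        zero_dotProduct, add_zero, AddChar.map_zero_eq_one]
      rw [Finset.sum_const, nsmul_eq_mul, mul_one]
      have : Fintype.card (Fin n → ZMod p) = p ^ n := by
        simp [ZMod.card]
      simp [this]
    have : G (0, 0) = U 0 0 * ψ (-((0 : Fin l → ZMod p) ⬝ᵥ c + (0 : Fin q → ZMod p) ⬝ᵥ d)) :=
      rfl
    rw [this, hU00]
    simp
  have hGbound : ∀ u : (Fin l → ZMod p) × (Fin q → ZMod p), u ≠ (0, 0) →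
      ‖G u‖ ≤ Real.sqrt ((p : ℝ) ^ n) := by
    rintro ⟨t, s⟩ hu
    by_cases hs : s = 0
    · subst hs
      have ht : t ≠ 0 := by
        intro h; exact hu (by rw [h])
      have hU0 : U t 0 = 0 := by
        rw [hU]
        simp only [hMs0, Matrix.zero_mulVec, dotProduct_zero, zero_add]
        have hcm : ∀ x : Fin n → ZMod p, bvec t ⬝ᵥ x = x ⬝ᵥ bvec t :=
          fun x => dotProduct_comm _ _
        simp_rw [hcm]
        rw [hψ, psi_sum_vec, if_neg (hbv0 t ht)]
      have : G (t, 0) = U t 0 * ψ (-(t ⬝ᵥ c + (0 : Fin q → ZMod p) ⬝ᵥ d)) := rfl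
      rw [this, hU0, zero_mul, norm_zero]
      exact Real.sqrt_nonneg _
    · have hrk : (Ms s).rank = n := hrank s hs
      have hnorm : ‖U t s‖ = Real.sqrt ((p : ℝ) ^ n) := by
        rw [hU, hψ]
        exact quad_norm hp2 (hMsymm s) (mulVec_inj hrk) (bvec t)
      have : G (t, s) = U t s * ψ (-(t ⬝ᵥ c + s ⬝ᵥ d)) := rfl
      rw [this, norm_mul, hnorm, hψ, psi_norm, mul_one]
  -- numeric facts
  have hnlq : 2 * (l + q) + 1 ≤ n := by
    have h1 : 2 * ((l : ℝ) + q) < n := by linarith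
    have : (2 * (l + q) : ℝ) < (n : ℝ) := by push_cast; linarith
    exact_mod_cast this
  have hp1R : (1 : ℝ) < p := by exact_mod_cast hp.one_lt
  have hsq : Real.sqrt ((p : ℝ) ^ n) ^ 2 = (p : ℝ) ^ n :=
    Real.sq_sqrt (by positivity)
  have hcard_lt : ((p : ℝ) ^ l * (p : ℝ) ^ q) < Real.sqrt ((p : ℝ) ^ n) := by
    have h1 : ((p : ℝ) ^ l * (p : ℝ) ^ q) ^ 2 < Real.sqrt ((p : ℝ) ^ n) ^ 2 := by
      rw [hsq, ← pow_add, ← pow_mul]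
      exact pow_lt_pow_right₀ hp1R (by omega)
    have h2 : (0 : ℝ) ≤ (p : ℝ) ^ l * (p : ℝ) ^ q := by positivity
    nlinarith [Real.sqrt_nonneg ((p : ℝ) ^ n)]
  -- conclude Sol is nonempty
  have hne : Sol.Nonempty := by
    rw [Finset.nonempty_iff_ne_empty]
    intro hempty
    rw [hempty] at main
    simp only [Finset.card_empty, Nat.cast_zero, zero_mul] at main
    have hsplit : ∑ u : (Fin l → ZMod p) × (Fin q → ZMod p), G u
        = G (0, 0) + ∑ u ∈ Finset.univ.erase (0, 0), G u := by
      rw [← Finset.add_sum_erase _ G (Finset.mem_univ (0, 0))]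
    rw [hsplit, hG00] at main
    have hE : ‖∑ u ∈ Finset.univ.erase ((0 : Fin l → ZMod p), (0 : Fin q → ZMod p)) , G u‖
        = (p : ℝ) ^ n := by
      have : ∑ u ∈ Finset.univ.erase ((0 : Fin l → ZMod p), (0 : Fin q → ZMod p)), G u
          = -((p : ℂ) ^ n) := eq_neg_of_add_eq_zero_right main.symm
      rw [this]
      simp
    have hle : ‖∑ u ∈ Finset.univ.erase ((0 : Fin l → ZMod p), (0 : Fin q → ZMod p)), G u‖
        ≤ ((p : ℝ) ^ l * (p : ℝ) ^ q) * Real.sqrt ((p : ℝ) ^ n) := by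
      refine (norm_sum_le _ _).trans ?_
      have hcard : (Finset.univ.erase ((0 : Fin l → ZMod p), (0 : Fin q → ZMod p))).card
          ≤ p ^ l * p ^ q := by
        refine (Finset.card_le_univ _).trans_eq ?_
        simp [Fintype.card_prod, ZMod.card]
      calc ∑ u ∈ Finset.univ.erase ((0 : Fin l → ZMod p), (0 : Fin q → ZMod p)), ‖G u‖
          ≤ ∑ _u ∈ Finset.univ.erase ((0 : Fin l → ZMod p), (0 : Fin q → ZMod p)),
            Real.sqrt ((p : ℝ) ^ n) := by
            refine Finset.sum_le_sum fun u hu => hGbound u ?_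
            exact (Finset.mem_erase.mp hu).1
        _ ≤ ((p : ℝ) ^ l * (p : ℝ) ^ q) * Real.sqrt ((p : ℝ) ^ n) := by
            rw [Finset.sum_const, nsmul_eq_mul]
            refine mul_le_mul_of_nonneg_right ?_ (Real.sqrt_nonneg _)
            calc ((Finset.univ.erase ((0 : Fin l → ZMod p), (0 : Fin q → ZMod p))).card : ℝ)
                ≤ ((p ^ l * p ^ q : ℕ) : ℝ) := by exact_mod_cast hcard
              _ = (p : ℝ) ^ l * (p : ℝ) ^ q := by push_cast; ring
    have hlt : ((p : ℝ) ^ l * (p : ℝ) ^ q) * Real.sqrt ((p : ℝ) ^ n) < (p : ℝ) ^ n := by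
      calc ((p : ℝ) ^ l * (p : ℝ) ^ q) * Real.sqrt ((p : ℝ) ^ n)
          < Real.sqrt ((p : ℝ) ^ n) * Real.sqrt ((p : ℝ) ^ n) := by
            refine mul_lt_mul_of_pos_right hcard_lt ?_
            exact Real.sqrt_pos.mpr (by positivity)
        _ = (p : ℝ) ^ n := by rw [← sq, hsq]
    linarith [hE ▸ hle]
  obtain ⟨x, hx⟩ := hne
  rw [hSol, Finset.mem_filter] at hx
  obtain ⟨-, h1, h2⟩ := hx
  refine ⟨x, fun j => ?_, fun i => ?_⟩
  · have := congrFun h1 j; simpa [sub_eq_zero] using this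
  · have := congrFun h2 i; simpa [sub_eq_zero] using this
end
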